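/- Let (E, Ω) be a finite-dimensional complex vector space with non-degenerate Hermitian form and let N ∈ u(E, Ω) be nilpotent. Then E admits an Ω-orthogonal decomposition into N-invariant subspaces E = ⊕_j E_j such that Ω is non-degenerate on each E_j and the restriction of N to each E_j is a single Jordan block. -/

import Mathlib

set_option linter.unusedSectionVars false
set_option maxHeartbeats 1000000

section Helpers
variable {E : Type*} [AddCommGroup E] [Module ℂ E]
    (Ω : E → E → ℂ)
    (hΩadd : ∀ u u' v, Ω (u + u') v = Ω u v + Ω u' v)
    (hΩsmul : ∀ (a : ℂ) (u v : E), Ω (a • u) v = a * Ω u v)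
    (hΩherm : ∀ u v, (starRingEnd ℂ) (Ω u v) = Ω v u)

include hΩsmul in
lemma omega_zero_left : ∀ v, Ω 0 v = 0 := by
  intro v; have := hΩsmul 0 0 v; simpa using this

include hΩsmul hΩherm in
lemma omega_zero_right : ∀ u, Ω u 0 = 0 := by
  intro u; rw [← hΩherm, omega_zero_left Ω hΩsmul, map_zero]

include hΩadd hΩherm in
lemma omega_add_right : ∀ u v v', Ω u (v + v') = Ω u v + Ω u v' := by
  intro u v v'; rw [← hΩherm, hΩadd, map_add, hΩherm, hΩherm]

include hΩsmul hΩherm in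
lemma omega_smul_right : ∀ (a : ℂ) u v, Ω u (a • v) = (starRingEnd ℂ) a * Ω u v := by
  intro a u v; rw [← hΩherm, hΩsmul, map_mul, hΩherm]

include hΩadd in
lemma omega_sub_left : ∀ u u' v, Ω (u - u') v = Ω u v - Ω u' v := by
  intro u u' v
  have h := hΩadd (u - u') u' v
  rw [sub_add_cancel] at h
  linear_combination -h

include hΩadd hΩsmul in
lemma omega_sum_left {ι : Type*} (s : Finset ι) (f : ι → E) (z : E) :
    Ω (∑ i ∈ s, f i) z = ∑ i ∈ s, Ω (f i) z := by
  classical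
  induction s using Finset.induction_on with
  | empty => simp [omega_zero_left Ω hΩsmul]
  | @insert a s hni ih => rw [Finset.sum_insert hni, hΩadd, ih, Finset.sum_insert hni]

variable (N : Module.End ℂ E) (hskew : ∀ u v, Ω (N u) v + Ω u (N v) = 0)

include hskew in
lemma omega_pow : ∀ (j : ℕ) (u z : E), Ω u ((N ^ j) z) = (-1 : ℂ) ^ j * Ω ((N ^ j) u) z := by
  intro j
  induction j with
  | zero => intro u z; simp
  | succ j ih =>
    intro u z
    have h1 : (N ^ (j + 1)) z = (N ^ j) (N z) := by
      rw [pow_succ, Module.End.mul_apply]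
    have h2 : (N ^ (j + 1)) u = N ((N ^ j) u) := by
      rw [pow_succ', Module.End.mul_apply]
    rw [h1, ih, h2]
    have := hskew ((N ^ j) u) z
    ring_nf
    linear_combination ((-1 : ℂ) ^ j) * this

end Helpers

/-- the orthogonal complement (in the first slot) of a set -/
def orthE {E : Type*} [AddCommGroup E] [Module ℂ E]
    (Ω : E → E → ℂ)
    (hΩadd : ∀ u u' v, Ω (u + u') v = Ω u v + Ω u' v)
    (hΩsmul : ∀ (a : ℂ) (u v : E), Ω (a • u) v = a * Ω u v)
    (W : Submodule ℂ E) : Submodule ℂ E where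
  carrier := {u | ∀ z ∈ W, Ω u z = 0}
  add_mem' := by
    intro a b ha hb z hz
    rw [hΩadd, ha z hz, hb z hz, add_zero]
  zero_mem' := by
    intro z hz
    exact omega_zero_left Ω hΩsmul z
  smul_mem' := by
    intro a x hx z hz
    rw [hΩsmul, hx z hz, mul_zero]

theorem aux {E : Type*} [AddCommGroup E] [Module ℂ E] [FiniteDimensional ℂ E]
    (Ω : E → E → ℂ)
    (hΩadd : ∀ u u' v, Ω (u + u') v = Ω u v + Ω u' v)
    (hΩsmul : ∀ (a : ℂ) (u v : E), Ω (a • u) v = a * Ω u v)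
    (hΩherm : ∀ u v, (starRingEnd ℂ) (Ω u v) = Ω v u)
    (N : Module.End ℂ E)
    (hskew : ∀ u v, Ω (N u) v + Ω u (N v) = 0)
    (hnil : IsNilpotent N) :
    ∀ (n : ℕ) (F : Submodule ℂ E), Module.finrank ℂ F ≤ n →
      (∀ x ∈ F, N x ∈ F) →
      (∀ u ∈ F, (∀ v ∈ F, Ω u v = 0) → u = 0) →
      ∃ (k : ℕ) (Ej : Fin k → Submodule ℂ E),
        iSupIndep Ej ∧ (⨆ j, Ej j) = F ∧
        (∀ j, ∀ x ∈ Ej j, N x ∈ Ej j) ∧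
        (∀ j j', j ≠ j' → ∀ u ∈ Ej j, ∀ v ∈ Ej j', Ω u v = 0) ∧
        (∀ j, ∀ u ∈ Ej j, (∀ v ∈ Ej j, Ω u v = 0) → u = 0) ∧
        (∀ j, ∃ v, v ∈ Ej j ∧ v ≠ 0 ∧
          Ej j = Submodule.span ℂ (Set.range fun i : ℕ => (N ^ i) v)) := by
  classical
  -- trivial decomposition of ⊥
  have hbotcase : ∃ (k : ℕ) (Ej : Fin k → Submodule ℂ E),
        iSupIndep Ej ∧ (⨆ j, Ej j) = (⊥ : Submodule ℂ E) ∧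
        (∀ j, ∀ x ∈ Ej j, N x ∈ Ej j) ∧
        (∀ j j', j ≠ j' → ∀ u ∈ Ej j, ∀ v ∈ Ej j', Ω u v = 0) ∧
        (∀ j, ∀ u ∈ Ej j, (∀ v ∈ Ej j, Ω u v = 0) → u = 0) ∧
        (∀ j, ∃ v, v ∈ Ej j ∧ v ≠ 0 ∧
          Ej j = Submodule.span ℂ (Set.range fun i : ℕ => (N ^ i) v)) := by
    refine ⟨0, Fin.elim0, ?_, ?_, fun j => j.elim0, fun j => j.elim0,
      fun j => j.elim0, fun j => j.elim0⟩
    · intro i; exact i.elim0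
    · exact iSup_of_empty _
  intro n
  induction n with
  | zero =>
    intro F hrank _ _
    have hF : F = ⊥ := by
      have : Module.finrank ℂ F = 0 := Nat.le_zero.mp hrank
      exact Submodule.finrank_eq_zero.mp this
    rw [hF] at *
    simpa [hF] using hbotcase
  | succ n ih =>
    intro F hrank hFinv hFnd
    by_cases hFbot : F = ⊥
    · simpa [hFbot] using hbotcase
    -- nilpotency degree on F
    obtain ⟨n0, hn0⟩ := hnil
    have hex : ∃ m : ℕ, ∀ x ∈ F, (N ^ m) x = 0 :=
      ⟨n0, fun x _ => by rw [hn0]; rfl⟩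
    set m := Nat.find hex with hm_def
    have hm : ∀ x ∈ F, (N ^ m) x = 0 := Nat.find_spec hex
    have hm1 : 1 ≤ m := by
      by_contra h
      have hm0 : m = 0 := by omega
      apply hFbot
      rw [Submodule.eq_bot_iff]
      intro x hx
      have := hm x hx
      rwa [hm0, pow_zero, Module.End.one_apply] at this
    have hvex : ¬ (∀ x ∈ F, (N ^ (m - 1)) x = 0) := Nat.find_min hex (by omega)
    push_neg at hvex
    obtain ⟨v0, hv0F, hv0⟩ := hvex
    -- powers of N preserve F
    have hFpow : ∀ (i : ℕ) (x : E), x ∈ F → (N ^ i) x ∈ F := by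
      intro i
      induction i with
      | zero => intro x hx; simpa using hx
      | succ i ih2 =>
        intro x hx
        rw [pow_succ', Module.End.mul_apply]
        exact hFinv _ (ih2 x hx)
    -- vanishing of high powers on elements of F
    have hbig : ∀ (x : E), x ∈ F → ∀ t, m ≤ t → (N ^ t) x = 0 := by
      intro x hx t ht
      rw [← Nat.sub_add_cancel ht, pow_add, Module.End.mul_apply, hm x hx, map_zero]
    -- find v with Ω (N^(m-1) v) v ≠ 0  (polarization)
    have hvchoice : ∃ v ∈ F, Ω ((N ^ (m - 1)) v) v ≠ 0 := by
      by_contra h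
      push_neg at h
      have hall : ∀ u ∈ F, ∀ z ∈ F, Ω ((N ^ (m - 1)) u) z = 0 := by
        intro u hu z hz
        have h1 := h _ (F.add_mem hu hz)
        have h2 := h _ (F.add_mem hu (F.smul_mem Complex.I hz))
        have huu := h u hu
        have hzz := h z hz
        have e1 : Ω ((N ^ (m - 1)) u) z + Ω ((N ^ (m - 1)) z) u = 0 := by
          rw [map_add] at h1
          rw [hΩadd, omega_add_right Ω hΩadd hΩherm, omega_add_right Ω hΩadd hΩherm] at h1
          linear_combination h1 - huu - hzz
        have e2 : - Complex.I * Ω ((N ^ (m - 1)) u) z + Complex.I * Ω ((N ^ (m - 1)) z) u = 0 := by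
          rw [map_add, map_smul] at h2
          rw [hΩadd, hΩsmul, omega_add_right Ω hΩadd hΩherm, omega_add_right Ω hΩadd hΩherm,
            omega_smul_right Ω hΩsmul hΩherm, omega_smul_right Ω hΩsmul hΩherm] at h2
          simp only [Complex.conj_I] at h2
          linear_combination h2 - huu - (Complex.I * -Complex.I) * hzz
        have : (2 : ℂ) * Ω ((N ^ (m - 1)) u) z = 0 := by
          linear_combination e1 + Complex.I * e2 + (Ω ((N ^ (m - 1)) u) z - Ω ((N ^ (m - 1)) z) u) * Complex.I_sq
        exact (mul_eq_zero.mp this).resolve_left two_ne_zero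
      apply hv0
      apply hFnd _ (hFpow (m - 1) v0 hv0F)
      intro z hz
      exact hall v0 hv0F z hz
    
    obtain ⟨v, hvF, hc⟩ := hvchoice
    -- the cyclic subspace
    set W : Submodule ℂ E := Submodule.span ℂ (Set.range fun i : ℕ => (N ^ i) v) with hW_def
    set w : Fin m → E := fun i => (N ^ (i : ℕ)) v with hw_def
    have hWeq : W = Submodule.span ℂ (Set.range w) := by
      apply le_antisymm
      · rw [hW_def, Submodule.span_le]
        rintro x ⟨i, rfl⟩
        by_cases hi : i < m
        · exact Submodule.subset_span ⟨⟨i, hi⟩, rfl⟩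
        · have : (N ^ i) v = 0 := hbig v hvF i (by omega)
          simp only [this]
          exact Submodule.zero_mem _
      · rw [hW_def, Submodule.span_le]
        rintro x ⟨i, rfl⟩
        exact Submodule.subset_span ⟨(i : ℕ), rfl⟩
    have hgram : ∀ (i j : Fin m),
        Ω (w i) (w j) = (-1 : ℂ) ^ (j : ℕ) * Ω ((N ^ ((j : ℕ) + (i : ℕ))) v) v := by
      intro i j
      rw [hw_def]
      simp only
      rw [omega_pow Ω N hskew (j : ℕ) ((N ^ (i : ℕ)) v) v]
      congr 2
      rw [← Module.End.mul_apply, ← pow_add]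
    have key : ∀ c : Fin m → ℂ, (∀ j : Fin m, ∑ i, c i * Ω (w i) (w j) = 0) → c = 0 := by
      intro c hcz
      by_contra hne
      have hex2 : ∃ i : ℕ, ∃ h : i < m, c ⟨i, h⟩ ≠ 0 := by
        obtain ⟨i, hi⟩ := Function.ne_iff.mp hne
        exact ⟨i, i.isLt, by simpa using hi⟩
      set i0 := Nat.find hex2 with hi0_def
      obtain ⟨hi0m, hi0ne⟩ := Nat.find_spec hex2
      have hlow : ∀ i : Fin m, (i : ℕ) < i0 → c i = 0 := by
        intro i hilt
        have h3 := Nat.find_min hex2 hilt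
        push_neg at h3
        simpa using h3 i.isLt
      set j0 : Fin m := ⟨m - 1 - i0, by omega⟩ with hj0
      have hsum := hcz j0
      rw [Finset.sum_eq_single (⟨i0, hi0m⟩ : Fin m)] at hsum
      · have hj0i0 : (j0 : ℕ) + i0 = m - 1 := by simp only [hj0]; omega
        rw [hgram, hj0i0] at hsum
        have hne1 : (-1 : ℂ) ^ (j0 : ℕ) ≠ 0 := pow_ne_zero _ (by norm_num)
        rcases mul_eq_zero.mp hsum with h' | h'
        · exact hi0ne h'
        · rcases mul_eq_zero.mp h' with h'' | h''
          · exact hne1 h''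
          · exact hc h''
      · intro b _ hbne
        rcases lt_or_gt_of_ne (fun h : (b : ℕ) = i0 => hbne (Fin.ext h)) with hlt | hgt
        · rw [hlow b hlt, zero_mul]
        · have : (N ^ ((j0 : ℕ) + (b : ℕ))) v = 0 := by
            apply hbig v hvF
            simp only [hj0]
            omega
          rw [hgram, this, omega_zero_left Ω hΩsmul, mul_zero, mul_zero]
      · intro h; exact absurd (Finset.mem_univ _) h
    -- the Gram operator and its surjectivity
    let L : (Fin m → ℂ) →ₗ[ℂ] (Fin m → ℂ) :=
      { toFun := fun c j => ∑ i, c i * Ω (w i) (w j)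
        map_add' := by
          intro c d; funext j
          simp [add_mul, Finset.sum_add_distrib]
        map_smul' := by
          intro a c; funext j
          simp [Finset.mul_sum, mul_assoc] }
    have hLinj : Function.Injective L := by
      rw [injective_iff_map_eq_zero]
      intro c hcz
      exact key c (fun j => congrFun hcz j)
    have hLsurj : Function.Surjective L := LinearMap.injective_iff_surjective.mp hLinj
    have hwW : ∀ i : Fin m, w i ∈ W := fun i => by
      rw [hWeq]; exact Submodule.subset_span ⟨i, rfl⟩
    have hWF : W ≤ F := by
      rw [hW_def, Submodule.span_le]
      rintro x ⟨i, rfl⟩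
      exact hFpow i v hvF
    have hWinv : ∀ x ∈ W, N x ∈ W := by
      intro x hx
      rw [hW_def] at hx ⊢
      induction hx using Submodule.span_induction with
      | mem x hxm =>
        obtain ⟨i, rfl⟩ := hxm
        refine Submodule.subset_span ⟨i + 1, ?_⟩
        show (N ^ (i + 1)) v = N ((N ^ i) v)
        rw [pow_succ', Module.End.mul_apply]
      | zero => rw [map_zero]; exact Submodule.zero_mem _
      | add a b ha hb iha ihb => rw [map_add]; exact Submodule.add_mem _ iha ihb
      | smul a x hx ihx => rw [map_smul]; exact Submodule.smul_mem _ a ihx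
    have hWnd : ∀ u ∈ W, (∀ z ∈ W, Ω u z = 0) → u = 0 := by
      intro u huW hort
      have huW' : u ∈ Submodule.span ℂ (Set.range w) := by rwa [← hWeq]
      obtain ⟨c, hcrep⟩ := Submodule.mem_span_range_iff_exists_fun ℂ |>.mp huW'
      have hcz : ∀ j : Fin m, ∑ i, c i * Ω (w i) (w j) = 0 := by
        intro j
        have h4 := hort (w j) (hwW j)
        rw [← hcrep, omega_sum_left Ω hΩadd hΩsmul] at h4
        calc ∑ i, c i * Ω (w i) (w j) = ∑ i, Ω (c i • w i) (w j) := by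
              exact Finset.sum_congr rfl fun i _ => (hΩsmul (c i) (w i) (w j)).symm
          _ = 0 := h4
      rw [← hcrep, key c hcz]
      simp
    -- the orthogonal complement
    set F' : Submodule ℂ E := F ⊓ orthE Ω hΩadd hΩsmul W with hF'_def
    have hmemF' : ∀ x : E, x ∈ F' ↔ x ∈ F ∧ ∀ z ∈ W, Ω x z = 0 := fun x => Iff.rfl
    have hsup : W ⊔ F' = F := by
      apply le_antisymm
      · exact sup_le hWF inf_le_left
      · intro x hx
        obtain ⟨c, hLc⟩ := hLsurj (fun j => Ω x (w j))
        set u := ∑ i, c i • w i with hu_def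
        have huW : u ∈ W := Submodule.sum_mem _ (fun i _ => Submodule.smul_mem _ _ (hwW i))
        have hxu : ∀ j : Fin m, Ω (x - u) (w j) = 0 := by
          intro j
          have h1 : Ω u (w j) = ∑ i, c i * Ω (w i) (w j) := by
            rw [hu_def, omega_sum_left Ω hΩadd hΩsmul]
            exact Finset.sum_congr rfl fun i _ => hΩsmul (c i) (w i) (w j)
          have h2 : (∑ i, c i * Ω (w i) (w j)) = Ω x (w j) := congrFun hLc j
          rw [omega_sub_left Ω hΩadd, h1, h2, sub_self]
        have hxuW : ∀ z ∈ W, Ω (x - u) z = 0 := by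
          intro z hz
          rw [hWeq] at hz
          induction hz using Submodule.span_induction with
          | mem z hzm => obtain ⟨j, rfl⟩ := hzm; exact hxu j
          | zero => exact omega_zero_right Ω hΩsmul hΩherm _
          | add a b ha hb iha ihb =>
            rw [omega_add_right Ω hΩadd hΩherm, iha, ihb, add_zero]
          | smul a z hz ihz =>
            rw [omega_smul_right Ω hΩsmul hΩherm, ihz, mul_zero]
        have hmem : x - u ∈ F' := ⟨F.sub_mem hx (hWF huW), hxuW⟩
        have hxeq : u + (x - u) = x := by abel
        rw [← hxeq]
        exact Submodule.add_mem_sup huW hmem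
    have hdisj : W ⊓ F' = ⊥ := by
      rw [eq_bot_iff]
      intro x hx
      obtain ⟨hxW, hxF'⟩ := Submodule.mem_inf.mp hx
      have hxo := (hmemF' x).mp hxF'
      rw [Submodule.mem_bot]
      exact hWnd x hxW hxo.2
    have hvW : v ∈ W := by
      rw [hW_def]
      exact Submodule.subset_span ⟨0, by simp⟩
    have hvne : v ≠ 0 := by
      intro h
      apply hc
      rw [h, map_zero, omega_zero_left Ω hΩsmul]
    have hWne : W ≠ ⊥ := fun h => hvne (by rw [h, Submodule.mem_bot] at hvW; exact hvW)
    have hrank' : Module.finrank ℂ F' ≤ n := by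
      have hsum2 := Submodule.finrank_sup_add_finrank_inf_eq W F'
      rw [hsup, hdisj] at hsum2
      have hWpos : 0 < Module.finrank ℂ W :=
        Nat.pos_of_ne_zero (fun h0 => hWne (Submodule.finrank_eq_zero.mp h0))
      rw [finrank_bot ℂ E] at hsum2
      omega
    have hF'inv : ∀ x ∈ F', N x ∈ F' := by
      intro x hx
      obtain ⟨hxF, hxo⟩ := (hmemF' x).mp hx
      refine (hmemF' (N x)).mpr ⟨hFinv x hxF, ?_⟩
      intro z hz
      have h5 := hskew x z
      have h6 : Ω x (N z) = 0 := hxo (N z) (hWinv z hz)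
      linear_combination h5 - h6
    have hF'nd : ∀ u ∈ F', (∀ z ∈ F', Ω u z = 0) → u = 0 := by
      intro u hu hort
      obtain ⟨huF, huo⟩ := (hmemF' u).mp hu
      apply hFnd u huF
      intro z hz
      rw [← hsup] at hz
      obtain ⟨a, haW, b, hbF', rfl⟩ := Submodule.mem_sup.mp hz
      rw [omega_add_right Ω hΩadd hΩherm, huo a haW, hort b hbF', add_zero]
    obtain ⟨k, Ej', hind', hsup', hinv', horth', hnd', hcyc'⟩ := ih F' hrank' hF'inv hF'nd
    have hEF' : ∀ i, Ej' i ≤ F' := fun i => hsup' ▸ le_iSup Ej' i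
    refine ⟨k + 1, Fin.cons W Ej', ?_, ?_, ?_, ?_, ?_, ?_⟩
    · -- independence
      rw [iSupIndep_def]
      intro i
      induction i using Fin.cases with
      | zero =>
        have hle : (⨆ (j) (_ : j ≠ (0 : Fin (k + 1))), Fin.cons W Ej' j) ≤ F' := by
          apply iSup_le; intro j; apply iSup_le; intro hj
          induction j using Fin.cases with
          | zero => exact absurd rfl hj
          | succ i => rw [Fin.cons_succ]; exact hEF' i
        rw [Fin.cons_zero]
        exact Disjoint.mono_right hle (disjoint_iff.mpr hdisj)
      | succ t =>
        rw [Fin.cons_succ]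
        have hS : (⨆ (i) (_ : i ≠ t), Ej' i) ≤ F' :=
          iSup_le fun i => iSup_le fun _ => hEF' i
        have hle : (⨆ (j) (_ : j ≠ Fin.succ t), Fin.cons W Ej' j)
            ≤ W ⊔ ⨆ (i) (_ : i ≠ t), Ej' i := by
          apply iSup_le; intro j; apply iSup_le; intro hj
          induction j using Fin.cases with
          | zero => rw [Fin.cons_zero]; exact le_sup_left
          | succ i =>
            rw [Fin.cons_succ]
            have hit : i ≠ t := fun h => hj (by rw [h])
            exact le_sup_of_le_right (le_iSup₂ (f := fun i (_ : i ≠ t) => Ej' i) i hit)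
        apply Disjoint.mono_right hle
        have hmod : (W ⊔ ⨆ (i) (_ : i ≠ t), Ej' i) ⊓ F' = ⨆ (i) (_ : i ≠ t), Ej' i := by
          rw [sup_comm, sup_inf_assoc_of_le _ hS, hdisj, sup_bot_eq]
        rw [disjoint_iff, eq_bot_iff]
        intro x hx
        obtain ⟨hxt, hxWS⟩ := Submodule.mem_inf.mp hx
        have hxF' : x ∈ F' := hEF' t hxt
        have hxS : x ∈ (⨆ (i) (_ : i ≠ t), Ej' i) := by
          rw [← hmod]; exact Submodule.mem_inf.mpr ⟨hxWS, hxF'⟩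
        have hdt := disjoint_iff.mp (iSupIndep_def.mp hind' t)
        have : x ∈ Ej' t ⊓ ⨆ (i) (_ : i ≠ t), Ej' i := Submodule.mem_inf.mpr ⟨hxt, hxS⟩
        rw [hdt] at this
        exact this
    · -- iSup
      have hsupcons : (⨆ j, (Fin.cons W Ej' : Fin (k + 1) → Submodule ℂ E) j)
          = W ⊔ ⨆ i, Ej' i := by
        apply le_antisymm
        · apply iSup_le
          intro j
          induction j using Fin.cases with
          | zero => rw [Fin.cons_zero]; exact le_sup_left
          | succ i => rw [Fin.cons_succ]; exact le_trans (le_iSup Ej' i) le_sup_right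
        · apply sup_le
          · exact le_iSup (Fin.cons W Ej') 0
          · apply iSup_le; intro i
            refine le_iSup_of_le i.succ ?_
            rw [Fin.cons_succ]
      rw [hsupcons, hsup', hsup]
    · -- invariance
      intro j
      induction j using Fin.cases with
      | zero => rw [Fin.cons_zero]; exact hWinv
      | succ i => rw [Fin.cons_succ]; exact hinv' i
    · -- orthogonality
      intro j j' hjj'
      induction j using Fin.cases with
      | zero =>
        induction j' using Fin.cases with
        | zero => exact absurd rfl hjj'
        | succ i' =>
          rw [Fin.cons_zero, Fin.cons_succ]
          intro u huW z hz
          have hzF' : z ∈ F' := hEF' i' hz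
          have hzo := ((hmemF' z).mp hzF').2
          rw [← hΩherm z u, hzo u huW, map_zero]
      | succ i =>
        induction j' using Fin.cases with
        | zero =>
          rw [Fin.cons_succ, Fin.cons_zero]
          intro u hu z hzW
          have huF' : u ∈ F' := hEF' i hu
          exact ((hmemF' u).mp huF').2 z hzW
        | succ i' =>
          rw [Fin.cons_succ, Fin.cons_succ]
          have hii' : i ≠ i' := fun h => hjj' (by rw [h])
          exact horth' i i' hii'
    · -- nondegeneracy
      intro j
      induction j using Fin.cases with
      | zero => rw [Fin.cons_zero]; exact hWnd
      | succ i => rw [Fin.cons_succ]; exact hnd' i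
    · -- cyclicity
      intro j
      induction j using Fin.cases with
      | zero => rw [Fin.cons_zero]; exact ⟨v, hvW, hvne, hW_def⟩
      | succ i => rw [Fin.cons_succ]; exact hcyc' i

/-- A nilpotent `N ∈ u(E,Ω)` admits an `Ω`-orthogonal decomposition of `E` into
`N`-invariant subspaces on each of which `Ω` is non-degenerate and `N` is a single
Jordan block (a nonzero cyclic subspace). -/
theorem stmt10 {E : Type*} [AddCommGroup E] [Module ℂ E] [FiniteDimensional ℂ E]
    (Ω : E → E → ℂ)
    (hΩadd : ∀ u u' v, Ω (u + u') v = Ω u v + Ω u' v)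
    (hΩsmul : ∀ (a : ℂ) (u v : E), Ω (a • u) v = a * Ω u v)
    (hΩherm : ∀ u v, (starRingEnd ℂ) (Ω u v) = Ω v u)
    (hΩnd : ∀ u, (∀ v, Ω u v = 0) → u = 0)
    (N : Module.End ℂ E)
    (hskew : ∀ u v, Ω (N u) v + Ω u (N v) = 0)
    (hnil : IsNilpotent N) :
    ∃ (k : ℕ) (Ej : Fin k → Submodule ℂ E),
      DirectSum.IsInternal Ej ∧
      (∀ j, ∀ x ∈ Ej j, N x ∈ Ej j) ∧
      (∀ j j', j ≠ j' → ∀ u ∈ Ej j, ∀ v ∈ Ej j', Ω u v = 0) ∧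
      (∀ j, ∀ u ∈ Ej j, (∀ v ∈ Ej j, Ω u v = 0) → u = 0) ∧
      (∀ j, ∃ v, v ∈ Ej j ∧ v ≠ 0 ∧
        Ej j = Submodule.span ℂ (Set.range fun i : ℕ => (N ^ i) v)) := by
  obtain ⟨k, Ej, hind, hsup, hinv, horth, hnd, hcyc⟩ :=
    aux Ω hΩadd hΩsmul hΩherm N hskew hnil (Module.finrank ℂ E) ⊤
      (le_of_eq (finrank_top ℂ E)) (fun x _ => Submodule.mem_top)
      (fun u _ h => hΩnd u (fun v => h v Submodule.mem_top))
  exact ⟨k, Ej,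
    (DirectSum.isInternal_submodule_iff_iSupIndep_and_iSup_eq_top Ej).mpr ⟨hind, hsup⟩,
    hinv, horth, hnd, hcyc⟩
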